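/- For an equilibrium (ψ₀, θ₀) with Δ(θ₀) ≥ 0, the vectors e_± = ((2−α)/4 ∓ (sin ψ₀ /2)√(Δ(θ₀)/(2𝔘(θ₀))), 1)ᵀ are eigenvectors of M(ψ₀,θ₀) with respective eigenvalues λ_± = −((2−α)/4)√(2𝔘(θ₀)) sin ψ₀ ± (1/2)√(Δ(θ₀)). -/

import Mathlib

/-- when `Δ(θ₀) ≥ 0`, the vectors
`e_± = ((2-α)/4 ∓ (sin ψ₀/2)√(Δ/(2𝔘(θ₀))), 1)ᵀ` are eigenvectors of `M(ψ₀,θ₀)`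
with eigenvalues `λ_± = -((2-α)/4)√(2𝔘(θ₀)) sin ψ₀ ± (1/2)√Δ`. -/
theorem collision_equilibrium_eigenvectors
    (α : ℝ) (hα : 0 < α) (hα2 : α < 2)
    (U : ℝ → ℝ) (θ₀ ψ₀ : ℝ)
    (hU : 0 < U θ₀)
    (hψ : ψ₀ = Real.pi / 2 ∨ ψ₀ = -(Real.pi / 2))
    (hcrit : deriv U θ₀ = 0)
    (M : Matrix (Fin 2) (Fin 2) ℝ)
    (hM : M = !![(α / 2 - 1) * Real.sqrt (2 * U θ₀) * Real.sin ψ₀,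
                 -(deriv (deriv U) θ₀) * Real.sin ψ₀ / Real.sqrt (2 * U θ₀);
                 -(Real.sqrt (2 * U θ₀)) * Real.sin ψ₀, 0])
    (Δ : ℝ) (hΔ : Δ = ((2 - α) ^ 2 / 2) * U θ₀ + 4 * deriv (deriv U) θ₀)
    (hΔnn : 0 ≤ Δ) :
    M.mulVec ![(2 - α) / 4 - (Real.sin ψ₀ / 2) * Real.sqrt (Δ / (2 * U θ₀)), 1] =
      (-(((2 - α) / 4) * Real.sqrt (2 * U θ₀) * Real.sin ψ₀) + (1 / 2) * Real.sqrt Δ) •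
        ![(2 - α) / 4 - (Real.sin ψ₀ / 2) * Real.sqrt (Δ / (2 * U θ₀)), 1] ∧
    M.mulVec ![(2 - α) / 4 + (Real.sin ψ₀ / 2) * Real.sqrt (Δ / (2 * U θ₀)), 1] =
      (-(((2 - α) / 4) * Real.sqrt (2 * U θ₀) * Real.sin ψ₀) - (1 / 2) * Real.sqrt Δ) •
        ![(2 - α) / 4 + (Real.sin ψ₀ / 2) * Real.sqrt (Δ / (2 * U θ₀)), 1] := by
  subst hM
  set s := Real.sin ψ₀ with hs
  have hs2 : s ^ 2 = 1 := by
    rcases hψ with h | h <;> simp [hs, h] <;> ring_nf <;> simp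
  set u := U θ₀ with hu
  set d := deriv (deriv U) θ₀ with hd
  have h2u : (0:ℝ) < 2 * u := by linarith
  set r := Real.sqrt (2 * u) with hr
  have hr2 : r ^ 2 = 2 * u := Real.sq_sqrt h2u.le
  have hrpos : 0 < r := Real.sqrt_pos.mpr h2u
  have hrne : r ≠ 0 := hrpos.ne'
  set q := Real.sqrt Δ with hq
  have hq2 : q ^ 2 = Δ := Real.sq_sqrt hΔnn
  have hdivq : Real.sqrt (Δ / (2 * u)) = q / r := Real.sqrt_div hΔnn _
  rw [hdivq]
  have hq2' : q ^ 2 = (2 - α) ^ 2 / 2 * u + 4 * d := by rw [hq2, hΔ]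
  refine ⟨?_, ?_⟩ <;> funext i <;> fin_cases i <;>
    simp [Matrix.mulVec, dotProduct, Fin.sum_univ_two] <;> field_simp
  · linear_combination (8*(2-α)*r*q) * hs2 + (16*s) * hq2' - (4*(2-α)^2*s) * hr2
  · linear_combination (4*q) * hs2
  · linear_combination (-8*(2-α)*r*q) * hs2 + (16*s) * hq2' - (4*(2-α)^2*s) * hr2
  · linear_combination (-4*q) * hs2
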